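/- Let (X_i) be an ε-ranking supermartingale with ε > 0 with respect to a stopping time T, where X_0 is a constant x_0 ≥ 0 and the process has c-bounded differences, i.e., |X_{i+1}(ω) − X_i(ω)| ≤ c pointwise for all i. Then for every t ∈ ℕ with t ≥ 1, P[T ≥ t] ≤ A · exp(−t·ε²/(2(c+ε)²)), where A = exp(ε·x_0/(c+ε)²). -/

import Mathlib

open MeasureTheory Filter

lemma exp_le_cosh_add {d lam z : ℝ} (hd : 0 < d) (hz : |z| ≤ d) :
    Real.exp (lam * z) ≤ Real.cosh (lam * d) + (Real.sinh (lam * d) / d) * z := by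
  obtain ⟨hz1, hz2⟩ := abs_le.mp hz
  have hp : 0 ≤ (d + z) / (2 * d) := div_nonneg (by linarith) (by positivity)
  have hq : 0 ≤ (d - z) / (2 * d) := div_nonneg (by linarith) (by positivity)
  have hpq : (d + z) / (2 * d) + (d - z) / (2 * d) = 1 := by field_simp; ring
  have hconv := convexOn_exp.2 (Set.mem_univ (lam * d)) (Set.mem_univ (-(lam * d))) hp hq hpq
  simp only [smul_eq_mul] at hconv
  have hx : (d + z) / (2 * d) * (lam * d) + (d - z) / (2 * d) * (-(lam * d)) = lam * z := by
    field_simp; ring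
  rw [hx] at hconv
  refine hconv.trans (le_of_eq ?_)
  rw [Real.cosh_eq, Real.sinh_eq]
  field_simp
  ring

/-- If `X` is an ε-RSM with respect to the stopping time `T`, starting from a
constant value `x₀ ≥ 0` and with `c`-bounded differences, then for every `t ≥ 1`,
`P[T ≥ t] ≤ exp (ε·x₀/(c+ε)²) * exp (-t·ε²/(2(c+ε)²))`. -/
theorem rsm_stopping_time_concentration_bound
    {Ω : Type*} {m0 : MeasurableSpace Ω} {μ : Measure Ω} [IsProbabilityMeasure μ]
    (ℱ : Filtration ℕ m0) (X : ℕ → Ω → ℝ) (T : Ω → ℕ∞) (ε : ℝ) (hε : 0 < ε)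
    (hstop : ∀ i : ℕ, MeasurableSet[ℱ i] {ω | T ω ≤ (i : ℕ∞)})
    (hadapted : Adapted ℱ X)
    (hint : ∀ i, Integrable (X i) μ)
    (hnonneg : ∀ i ω, 0 ≤ X i ω)
    (hdec : ∀ i : ℕ, ∀ ω : Ω,
      (μ[X (i + 1) | ℱ i]) ω ≤ X i ω - ε * Set.indicator {ω | (i : ℕ∞) < T ω} (fun _ => 1) ω)
    (x₀ c : ℝ) (hx₀ : 0 ≤ x₀) (hc : 0 < c)
    (hX0 : ∀ ω : Ω, X 0 ω = x₀)
    (hbdd : ∀ i : ℕ, ∀ ω : Ω, |X (i + 1) ω - X i ω| ≤ c) :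
    ∀ t : ℕ, 1 ≤ t →
      (μ {ω | (t : ℕ∞) ≤ T ω}).toReal ≤
        Real.exp (ε * x₀ / (c + ε) ^ 2) * Real.exp (-(t : ℝ) * ε ^ 2 / (2 * (c + ε) ^ 2)) := by
  intro t ht
  set d : ℝ := c + ε with hd_def
  have hd : 0 < d := by positivity
  set lam : ℝ := ε / d ^ 2 with hlam_def
  have hlam : 0 < lam := by positivity
  -- indicator process and its running sum
  set I : ℕ → Ω → ℝ := fun i => Set.indicator {ω | (i : ℕ∞) < T ω} (fun _ => 1) with hI_def
  set S : ℕ → Ω → ℝ := fun i ω => ∑ j ∈ Finset.range i, I j ω with hS_def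
  set Y : ℕ → Ω → ℝ := fun i ω => X i ω + ε * S i ω with hY_def
  set G : ℕ → Ω → ℝ := fun i ω => Real.exp (lam * Y i ω) with hG_def
  -- basic facts about the indicator
  have hIset : ∀ i : ℕ, MeasurableSet[ℱ i] {ω | (i : ℕ∞) < T ω} := by
    intro i
    have : {ω | (i : ℕ∞) < T ω} = {ω | T ω ≤ (i : ℕ∞)}ᶜ := by
      ext ω; simp [not_le]
    rw [this]; exact (hstop i).compl
  have hImeas : ∀ i : ℕ, StronglyMeasurable[ℱ i] (I i) := fun i =>
    stronglyMeasurable_const.indicator (hIset i)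
  have hI01 : ∀ i ω, 0 ≤ I i ω ∧ I i ω ≤ 1 := by
    intro i ω
    by_cases h : ω ∈ {ω | (i : ℕ∞) < T ω} <;>
      simp [hI_def, Set.indicator_apply, h]
  have hSmeas : ∀ i : ℕ, StronglyMeasurable[ℱ i] (S i) := by
    intro i
    apply Finset.stronglyMeasurable_fun_sum
    intro j hj
    exact (hImeas j).mono (ℱ.mono (Finset.mem_range.mp hj).le)
  have hS01 : ∀ i ω, 0 ≤ S i ω ∧ S i ω ≤ i := by
    intro i ω
    constructor
    · exact Finset.sum_nonneg fun j _ => (hI01 j ω).1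
    · calc S i ω ≤ ∑ j ∈ Finset.range i, (1 : ℝ) :=
            Finset.sum_le_sum fun j _ => (hI01 j ω).2
        _ = i := by simp
  have hYmeas : ∀ i : ℕ, StronglyMeasurable[ℱ i] (Y i) := fun i =>
    (hadapted i).stronglyMeasurable.add (stronglyMeasurable_const.mul (hSmeas i))
  have hGmeas : ∀ i : ℕ, StronglyMeasurable[ℱ i] (G i) := fun i =>
    Real.continuous_exp.comp_stronglyMeasurable (stronglyMeasurable_const.mul (hYmeas i))
  -- bounds
  have hXbdd : ∀ i ω, X i ω ≤ x₀ + i * c := by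
    intro i
    induction i with
    | zero => intro ω; simp [hX0 ω]
    | succ n ih =>
      intro ω
      have h1 := (abs_le.mp (hbdd n ω)).2
      have := ih ω
      push_cast
      linarith
  have hYbdd : ∀ i ω, 0 ≤ Y i ω ∧ Y i ω ≤ x₀ + i * d := by
    intro i ω
    have h1 := hS01 i ω
    have h2 := hnonneg i ω
    have h3 := hXbdd i ω
    constructor
    · have : 0 ≤ ε * S i ω := mul_nonneg hε.le h1.1
      simp only [hY_def]; linarith
    · have : ε * S i ω ≤ ε * i := mul_le_mul_of_nonneg_left h1.2 hε.le
      simp only [hY_def, hd_def]; nlinarith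
  have hGpos : ∀ i ω, 0 < G i ω := fun i ω => Real.exp_pos _
  have hGint : ∀ i : ℕ, Integrable (G i) μ := by
    intro i
    refine ⟨((hGmeas i).mono (ℱ.le i)).aestronglyMeasurable, ?_⟩
    refine HasFiniteIntegral.of_bounded (C := Real.exp (lam * (x₀ + i * d)))
      (Eventually.of_forall fun ω => ?_)
    rw [Real.norm_eq_abs, abs_of_pos (hGpos i ω)]
    exact Real.exp_le_exp.mpr (mul_le_mul_of_nonneg_left (hYbdd i ω).2 hlam.le)
  -- the difference process
  set Δ : ℕ → Ω → ℝ := fun i ω => Y (i + 1) ω - Y i ω with hΔ_def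
  have hΔeq : ∀ i ω, Δ i ω = X (i + 1) ω - (X i ω - ε * I i ω) := by
    intro i ω
    simp only [hΔ_def, hY_def, hS_def, Finset.sum_range_succ]
    ring
  have hΔbdd : ∀ i ω, |Δ i ω| ≤ d := by
    intro i ω
    rw [hΔeq]
    have h1 := hbdd i ω
    have h2 := hI01 i ω
    have h3 : |ε * I i ω| ≤ ε := by
      rw [abs_of_nonneg (mul_nonneg hε.le h2.1)]
      nlinarith
    calc |X (i + 1) ω - (X i ω - ε * I i ω)|
        = |(X (i + 1) ω - X i ω) + ε * I i ω| := by ring_nf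
      _ ≤ |X (i + 1) ω - X i ω| + |ε * I i ω| := abs_add_le _ _
      _ ≤ c + ε := add_le_add h1 h3
  have hΔmeas : ∀ i, AEStronglyMeasurable (Δ i) μ := by
    intro i
    exact (((show Measurable[ℱ (i+1)] (X (i+1)) from hadapted (i+1)).stronglyMeasurable.mono (ℱ.le _)).sub
      (((show Measurable[ℱ i] (X i) from hadapted i).stronglyMeasurable.mono (ℱ.le _)).sub
        (stronglyMeasurable_const.mul ((hImeas i).mono (ℱ.le i))))).aestronglyMeasurable.congr
      (Eventually.of_forall fun ω => (hΔeq i ω).symm)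
  have hΔint : ∀ i, Integrable (Δ i) μ := by
    intro i
    refine ⟨hΔmeas i, HasFiniteIntegral.of_bounded (C := d)
      (Eventually.of_forall fun ω => ?_)⟩
    rw [Real.norm_eq_abs]; exact hΔbdd i ω
  -- conditional expectation of the difference is nonpositive
  have hcond : ∀ i, (μ[Δ i | ℱ i]) ≤ᵐ[μ] 0 := by
    intro i
    have hW : StronglyMeasurable[ℱ i] (fun ω => X i ω - ε * I i ω) :=
      (hadapted i).stronglyMeasurable.sub (stronglyMeasurable_const.mul (hImeas i))
    have hWint : Integrable (fun ω => X i ω - ε * I i ω) μ := by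
      refine (hint i).sub ?_
      refine ⟨(stronglyMeasurable_const.mul
        ((hImeas i).mono (ℱ.le i))).aestronglyMeasurable,
        HasFiniteIntegral.of_bounded (C := ε) (Eventually.of_forall fun ω => ?_)⟩
      rw [Real.norm_eq_abs, abs_of_nonneg (mul_nonneg hε.le (hI01 i ω).1)]
      nlinarith [(hI01 i ω).2]
    have h1 : (μ[Δ i | ℱ i]) =ᵐ[μ]
        μ[X (i + 1) | ℱ i] - μ[(fun ω => X i ω - ε * I i ω) | ℱ i] := by
      have : Δ i = fun ω => X (i + 1) ω - (X i ω - ε * I i ω) := funext fun ω => hΔeq i ω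
      rw [this]
      exact condExp_sub (hint (i + 1)) hWint _
    have h2 : μ[(fun ω => X i ω - ε * I i ω) | ℱ i] = fun ω => X i ω - ε * I i ω :=
      condExp_of_stronglyMeasurable (ℱ.le i) hW hWint
    filter_upwards [h1] with ω h1ω
    simp only [Pi.zero_apply]
    rw [h1ω]
    simp only [Pi.sub_apply, h2]
    have hd1 := hdec i ω
    have hIr : Set.indicator {ω | (i : ℕ∞) < T ω} (fun _ => (1:ℝ)) ω = I i ω := rfl
    rw [hIr] at hd1
    linarith
  -- the key product integral is nonpositive
  have hGΔint : ∀ i, Integrable (fun ω => G i ω * Δ i ω) μ := by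
    intro i
    refine ⟨(((hGmeas i).mono (ℱ.le i)).aestronglyMeasurable).mul (hΔmeas i),
      HasFiniteIntegral.of_bounded (C := Real.exp (lam * (x₀ + i * d)) * d)
      (Eventually.of_forall fun ω => ?_)⟩
    rw [Real.norm_eq_abs, abs_mul, abs_of_pos (hGpos i ω)]
    refine mul_le_mul ?_ (hΔbdd i ω) (abs_nonneg _) (Real.exp_pos _).le
    exact Real.exp_le_exp.mpr (mul_le_mul_of_nonneg_left (hYbdd i ω).2 hlam.le)
  have hGΔ : ∀ i, ∫ ω, G i ω * Δ i ω ∂μ ≤ 0 := by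
    intro i
    have hpull : μ[(fun ω => G i ω * Δ i ω) | ℱ i] =ᵐ[μ] fun ω => G i ω * (μ[Δ i | ℱ i]) ω := by
      exact condExp_mul_of_stronglyMeasurable_left (hGmeas i) (hGΔint i) (hΔint i)
    calc ∫ ω, G i ω * Δ i ω ∂μ
        = ∫ ω, (μ[(fun ω => G i ω * Δ i ω) | ℱ i]) ω ∂μ :=
          (integral_condExp (ℱ.le i)).symm
      _ = ∫ ω, G i ω * (μ[Δ i | ℱ i]) ω ∂μ := integral_congr_ae hpull
      _ ≤ 0 := by
          refine integral_nonpos_of_ae ?_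
          filter_upwards [hcond i] with ω hω
          exact mul_nonpos_of_nonneg_of_nonpos (hGpos i ω).le hω
  -- induction step: mgf bound
  have hstep : ∀ i : ℕ, ∫ ω, G (i + 1) ω ∂μ ≤
      Real.exp (lam ^ 2 * d ^ 2 / 2) * ∫ ω, G i ω ∂μ := by
    intro i
    have hch : Real.cosh (lam * d) ≤ Real.exp (lam ^ 2 * d ^ 2 / 2) := by
      have := Real.cosh_le_exp_half_sq (lam * d)
      calc Real.cosh (lam * d) ≤ Real.exp ((lam * d) ^ 2 / 2) := this
        _ = Real.exp (lam ^ 2 * d ^ 2 / 2) := by ring_nf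
    have hptwise : ∀ ω, G (i + 1) ω ≤
        Real.cosh (lam * d) * G i ω + (Real.sinh (lam * d) / d) * (G i ω * Δ i ω) := by
      intro ω
      have h1 : G (i + 1) ω = G i ω * Real.exp (lam * Δ i ω) := by
        simp only [hG_def, hΔ_def, ← Real.exp_add]
        ring_nf
      rw [h1]
      have h2 := exp_le_cosh_add (lam := lam) hd (hΔbdd i ω)
      calc G i ω * Real.exp (lam * Δ i ω)
          ≤ G i ω * (Real.cosh (lam * d) + (Real.sinh (lam * d) / d) * Δ i ω) :=
            mul_le_mul_of_nonneg_left h2 (hGpos i ω).le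
        _ = Real.cosh (lam * d) * G i ω + (Real.sinh (lam * d) / d) * (G i ω * Δ i ω) := by
            ring
    have hrhs_int : Integrable (fun ω =>
        Real.cosh (lam * d) * G i ω + (Real.sinh (lam * d) / d) * (G i ω * Δ i ω)) μ :=
      ((hGint i).const_mul _).add ((hGΔint i).const_mul _)
    calc ∫ ω, G (i + 1) ω ∂μ
        ≤ ∫ ω, (Real.cosh (lam * d) * G i ω
            + (Real.sinh (lam * d) / d) * (G i ω * Δ i ω)) ∂μ :=
          integral_mono (hGint (i + 1)) hrhs_int hptwise
      _ = Real.cosh (lam * d) * ∫ ω, G i ω ∂μ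
            + (Real.sinh (lam * d) / d) * ∫ ω, G i ω * Δ i ω ∂μ := by
          rw [integral_add ((hGint i).const_mul _) ((hGΔint i).const_mul _),
            integral_const_mul, integral_const_mul]
      _ ≤ Real.cosh (lam * d) * ∫ ω, G i ω ∂μ := by
          have hs : 0 ≤ Real.sinh (lam * d) / d := by
            refine div_nonneg ?_ hd.le
            rw [← Real.sinh_zero]
            exact Real.sinh_le_sinh.mpr (by positivity)
          nlinarith [hGΔ i, hs]
      _ ≤ Real.exp (lam ^ 2 * d ^ 2 / 2) * ∫ ω, G i ω ∂μ := by
          have : 0 ≤ ∫ ω, G i ω ∂μ := integral_nonneg fun ω => (hGpos i ω).le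
          exact mul_le_mul_of_nonneg_right hch this
  -- mgf bound by induction
  have hmgf : ∀ i : ℕ, ∫ ω, G i ω ∂μ ≤
      Real.exp (lam * x₀) * Real.exp (lam ^ 2 * d ^ 2 / 2) ^ i := by
    intro i
    induction i with
    | zero =>
      have : ∀ ω, G 0 ω = Real.exp (lam * x₀) := by
        intro ω
        simp [hG_def, hY_def, hS_def, hX0 ω]
      rw [integral_congr_ae (Eventually.of_forall this)]
      simp [measure_univ]
    | succ n ih =>
      calc ∫ ω, G (n + 1) ω ∂μ
          ≤ Real.exp (lam ^ 2 * d ^ 2 / 2) * ∫ ω, G n ω ∂μ := hstep n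
        _ ≤ Real.exp (lam ^ 2 * d ^ 2 / 2) *
              (Real.exp (lam * x₀) * Real.exp (lam ^ 2 * d ^ 2 / 2) ^ n) :=
            mul_le_mul_of_nonneg_left ih (Real.exp_pos _).le
        _ = Real.exp (lam * x₀) * Real.exp (lam ^ 2 * d ^ 2 / 2) ^ (n + 1) := by ring
  -- Markov / Chernoff step
  set A : Set Ω := {ω | (t : ℕ∞) ≤ T ω} with hA_def
  have hAmeas : MeasurableSet A := by
    have : A = {ω | T ω ≤ ((t - 1 : ℕ) : ℕ∞)}ᶜ := by
      ext ω
      simp only [hA_def, Set.mem_setOf_eq, Set.mem_compl_iff, not_le]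
      induction T ω using ENat.recTopCoe with
      | top => exact iff_of_true le_top (ENat.coe_lt_top _)
      | coe n =>
        rw [Nat.cast_le, Nat.cast_lt]
        omega
    rw [this]
    exact (ℱ.le _ _ (hstop (t - 1))).compl
  have hYt : ∀ ω ∈ A, ε * t ≤ Y t ω := by
    intro ω hω
    have hS : S t ω = t := by
      have h1 : ∀ j ∈ Finset.range t, I j ω = 1 := by
        intro j hj
        have hjt : (j : ℕ∞) < (t : ℕ∞) := Nat.cast_lt.mpr (Finset.mem_range.mp hj)
        have : (j : ℕ∞) < T ω := lt_of_lt_of_le hjt hω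
        simp [hI_def, Set.indicator_apply, this]
      calc S t ω = ∑ j ∈ Finset.range t, (1 : ℝ) := Finset.sum_congr rfl h1
        _ = t := by simp
    have := hnonneg t ω
    simp only [hY_def, hS]
    nlinarith
  have hmarkov : (μ A).toReal * Real.exp (lam * (ε * t)) ≤ ∫ ω, G t ω ∂μ := by
    have h1 : ∫ ω in A, Real.exp (lam * (ε * t)) ∂μ ≤ ∫ ω in A, G t ω ∂μ := by
      refine setIntegral_mono_on (integrable_const _).integrableOn
        ((hGint t).integrableOn) hAmeas ?_
      intro ω hω
      exact Real.exp_le_exp.mpr (mul_le_mul_of_nonneg_left (hYt ω hω) hlam.le)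
    have h2 : ∫ ω in A, Real.exp (lam * (ε * t)) ∂μ
        = (μ A).toReal * Real.exp (lam * (ε * t)) := by
      rw [setIntegral_const, smul_eq_mul, measureReal_def]
    have h3 : ∫ ω in A, G t ω ∂μ ≤ ∫ ω, G t ω ∂μ :=
      setIntegral_le_integral (hGint t) (Eventually.of_forall fun ω => (hGpos t ω).le)
    linarith
  -- conclude
  have hfinal : (μ A).toReal ≤
      Real.exp (lam * x₀) * Real.exp (lam ^ 2 * d ^ 2 / 2) ^ t / Real.exp (lam * (ε * t)) := by
    rw [le_div_iff₀ (Real.exp_pos _)]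
    exact hmarkov.trans (hmgf t)
  refine hfinal.trans (le_of_eq ?_)
  rw [← Real.exp_nat_mul, ← Real.exp_add, ← Real.exp_sub, ← Real.exp_add]
  congr 1
  simp only [hlam_def]
  field_simp
  ring
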